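/- Let r ≥ 2, t ≥ 3, and let G be a graph with a vertex v of degree exactly r(t−1), and let e be an edge incident to v. Then c_{r,S_t}(G − e) ≥ c_{r,S_t}(G), where G − e is obtained from G by deleting the edge e. -/

import Mathlib

open SimpleGraph Finset

/-- `G` contains a copy of `H`, i.e. a subgraph isomorphic to `H`. -/
def SimpleGraph.ContainsCopy {V W : Type*} (G : SimpleGraph V) (H : SimpleGraph W) : Prop :=
  ∃ f : H →g G, Function.Injective f

/-- The color class of color `i` in the `r`-edge-coloring `c` of `G`. -/
def colorClass {V : Type*} {r : ℕ} (G : SimpleGraph V) (c : G.edgeSet → Fin r) (i : Fin r) :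
    SimpleGraph V :=
  SimpleGraph.fromEdgeSet {e | ∃ h : e ∈ G.edgeSet, c ⟨e, h⟩ = i}

/-- The coloring `c` of `G` has a monochromatic copy of `H`. -/
def HasMonoCopy {V W : Type*} {r : ℕ} (G : SimpleGraph V) (H : SimpleGraph W)
    (c : G.edgeSet → Fin r) : Prop :=
  ∃ i : Fin r, (colorClass G c i).ContainsCopy H

/-- `c_{r,H}(G)`: the number of `r`-edge-colorings of `G` without a monochromatic copy of `H`. -/
noncomputable def goodCount {V W : Type*} (r : ℕ) (H : SimpleGraph W) (G : SimpleGraph V) : ℕ :=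
  Nat.card {c : G.edgeSet → Fin r // ¬ HasMonoCopy G H c}

/-- `c_{r,H}(n)`: the maximum of `c_{r,H}(G)` over all graphs `G` on `n` vertices. -/
noncomputable def cMax {W : Type*} (r : ℕ) (H : SimpleGraph W) (n : ℕ) : ℕ :=
  sSup {k | ∃ G : SimpleGraph (Fin n), goodCount r H G = k}

/-- `ex(n,H)`: the maximum number of edges of an `H`-free graph on `n` vertices. -/
noncomputable def exNum {W : Type*} (n : ℕ) (H : SimpleGraph W) : ℕ :=
  sSup {k | ∃ G : SimpleGraph (Fin n), ¬ G.ContainsCopy H ∧ G.edgeSet.ncard = k}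

/-- The star `S_t` with `t` edges: center `0` joined to `t` leaves. -/
def starGraph (t : ℕ) : SimpleGraph (Fin (t + 1)) where
  Adj u v := u ≠ v ∧ (u = 0 ∨ v = 0)
  symm := ⟨fun u v h => ⟨h.1.symm, h.2.symm⟩⟩
  loopless := ⟨fun u h => h.1 rfl⟩

lemma hasMono_of_card {V : Type*} {r t : ℕ} (G : SimpleGraph V) (c : G.edgeSet → Fin r)
    (i : Fin r) (v : V) (S : Finset V) (hcard : S.card = t)
    (hS : ∀ u ∈ S, ∃ h : G.Adj v u, c ⟨s(v,u), G.mem_edgeSet.mpr h⟩ = i) :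
    HasMonoCopy G (_root_.starGraph t) c := by
  classical
  have hvS : v ∉ S := fun hv => (hS v hv).choose.ne rfl
  let g : Fin t → V := fun j => (S.equivFin.symm (Fin.cast hcard.symm j) : V)
  have hgS : ∀ j, g j ∈ S := fun j => (S.equivFin.symm _).2
  have hginj : Function.Injective g := by
    intro a b hab
    have h2 := S.equivFin.symm.injective (Subtype.ext hab)
    have := congrArg Fin.val h2
    exact Fin.ext (by simpa using this)
  have hadj : ∀ j, (colorClass G c i).Adj v (g j) := by
    intro j
    obtain ⟨h, hc⟩ := hS (g j) (hgS j)
    rw [colorClass, SimpleGraph.fromEdgeSet_adj]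
    exact ⟨⟨G.mem_edgeSet.mpr h, hc⟩, h.ne⟩
  refine ⟨i, ⟨Fin.cases v g, ?_⟩, ?_⟩
  · rintro a b ⟨hne, h0 | h0⟩
    · subst h0
      rcases Fin.eq_zero_or_eq_succ b with rfl | ⟨j, rfl⟩
      · exact absurd rfl hne
      · simpa using hadj j
    · subst h0
      rcases Fin.eq_zero_or_eq_succ a with rfl | ⟨j, rfl⟩
      · exact absurd rfl hne
      · simpa using (hadj j).symm
  · intro a b hab
    replace hab : Fin.cases (motive := fun _ => V) v g a = Fin.cases (motive := fun _ => V) v g b := hab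
    rcases Fin.eq_zero_or_eq_succ a with rfl | ⟨j, rfl⟩ <;>
      rcases Fin.eq_zero_or_eq_succ b with rfl | ⟨k, rfl⟩ <;>
        simp only [Fin.cases_zero, Fin.cases_succ] at hab
    · rfl
    · exact absurd (hab ▸ hgS k) hvS
    · exact absurd (hab ▸ hgS j) (by simpa [hab] using hvS)
    · exact congrArg Fin.succ (hginj hab)

theorem stmt5 {V : Type*} [Fintype V] (r t : ℕ) (hr : 2 ≤ r) (ht : 3 ≤ t)
    (G : SimpleGraph V) (v : V) (hd : (G.neighborSet v).ncard = r * (t - 1))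
    (w : V) (hw : G.Adj v w) :
    goodCount r (_root_.starGraph t) G ≤ goodCount r (_root_.starGraph t) (G.deleteEdges {s(v, w)}) := by
  classical
  set G' := G.deleteEdges {s(v, w)} with hG'
  have hle : G' ≤ G := SimpleGraph.deleteEdges_le _
  have hsub : G'.edgeSet ⊆ G.edgeSet := SimpleGraph.edgeSet_mono hle
  set ρ : (G.edgeSet → Fin r) → (G'.edgeSet → Fin r) :=
    fun c e => c ⟨e.1, hsub e.2⟩ with hρ
  -- goodness is preserved
  have hρgood : ∀ c, ¬ HasMonoCopy G (_root_.starGraph t) c →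
      ¬ HasMonoCopy G' (_root_.starGraph t) (ρ c) := by
    rintro c hc ⟨i, f, hf⟩
    refine hc ⟨i, (SimpleGraph.Hom.ofLE ?_).comp f, hf⟩
    apply SimpleGraph.fromEdgeSet_mono
    rintro e ⟨he, hce⟩
    exact ⟨hsub he, hce⟩
  -- fiber counting at v
  have hrpos : 0 < r := by omega
  let colorAt : (G.edgeSet → Fin r) → V → Fin r := fun c u =>
    if h : G.Adj v u then c ⟨s(v, u), G.mem_edgeSet.mpr h⟩ else ⟨0, hrpos⟩
  let Nbr : Finset V := (G.neighborSet v).toFinset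
  let N : (G.edgeSet → Fin r) → Fin r → Finset V := fun c i =>
    Nbr.filter (fun u => colorAt c u = i)
  have hNbrcard : Nbr.card = r * (t - 1) := by
    rw [← hd, Set.ncard_eq_toFinset_card']
  have hsum : ∀ c, ∑ i : Fin r, (N c i).card = r * (t - 1) := by
    intro c
    rw [← hNbrcard]
    exact (Finset.card_eq_sum_card_fiberwise (fun u _ => Finset.mem_univ (colorAt c u))).symm
  have hle1 : ∀ c, ¬ HasMonoCopy G (_root_.starGraph t) c → ∀ i, (N c i).card ≤ t - 1 := by
    intro c hc i
    by_contra hlt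
    push_neg at hlt
    have ht' : t ≤ (N c i).card := by omega
    obtain ⟨S, hSsub, hScard⟩ := Finset.exists_subset_card_eq ht'
    refine hc (hasMono_of_card G c i v S hScard ?_)
    intro u hu
    have hu' := hSsub hu
    simp only [N, Finset.mem_filter] at hu'
    have hadj : G.Adj v u := by
      have := hu'.1
      simpa [Nbr, Set.mem_toFinset] using this
    refine ⟨hadj, ?_⟩
    have := hu'.2
    simpa only [colorAt, dif_pos hadj] using this
  have hexact : ∀ c, ¬ HasMonoCopy G (_root_.starGraph t) c → ∀ i, (N c i).card = t - 1 := by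
    intro c hc i
    by_contra hne
    have hlt : (N c i).card < t - 1 := lt_of_le_of_ne (hle1 c hc i) hne
    have : ∑ j : Fin r, (N c j).card < ∑ _j : Fin r, (t - 1) :=
      Finset.sum_lt_sum (fun j _ => hle1 c hc j) ⟨i, Finset.mem_univ i, hlt⟩
    rw [hsum c, Finset.sum_const, Finset.card_univ, Fintype.card_fin, smul_eq_mul] at this
    omega
  -- injectivity
  have hinj : Function.Injective
      (fun c : {c : G.edgeSet → Fin r // ¬ HasMonoCopy G (_root_.starGraph t) c} =>
        (⟨ρ c.1, hρgood c.1 c.2⟩ :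
          {c : G'.edgeSet → Fin r // ¬ HasMonoCopy G' (_root_.starGraph t) c})) := by
    rintro ⟨c₁, h₁⟩ ⟨c₂, h₂⟩ hc
    simp only [Subtype.mk.injEq] at hc ⊢
    have hagree : ∀ e : G.edgeSet, e.1 ≠ s(v, w) → c₁ e = c₂ e := by
      rintro ⟨e, he⟩ hne
      have he' : e ∈ G'.edgeSet := by
        rw [hG', SimpleGraph.edgeSet_deleteEdges]
        exact ⟨he, by simpa using hne⟩
      have := congrFun hc (⟨e, he'⟩ : G'.edgeSet)
      simpa [ρ] using this
    set E : G.edgeSet := ⟨s(v, w), G.mem_edgeSet.mpr hw⟩ with hE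
    have hkey : c₁ E = c₂ E := by
      by_contra hneq
      set i₁ := c₁ E with hi₁
      have hNw : N c₂ i₁ = (N c₁ i₁).erase w := by
        ext u
        simp only [N, Finset.mem_filter, Finset.mem_erase]
        constructor
        · rintro ⟨hmem, hcol⟩
          have hadj : G.Adj v u := by simpa [Nbr, Set.mem_toFinset] using hmem
          have huw : u ≠ w := by
            rintro rfl
            rw [show colorAt c₂ u = c₂ E from by
              simp only [colorAt, dif_pos hadj]; rfl] at hcol
            exact hneq (hcol ▸ rfl)
          refine ⟨huw, hmem, ?_⟩
          have hedne : s(v, u) ≠ s(v, w) := by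
            intro h
            rcases Sym2.eq_iff.mp h with ⟨-, h2⟩ | ⟨h1, -⟩
            · exact huw h2
            · exact hw.ne h1
          rw [show colorAt c₁ u = c₁ ⟨s(v,u), G.mem_edgeSet.mpr hadj⟩ from by
            simp only [colorAt, dif_pos hadj]]
          rw [hagree _ hedne]
          rw [show colorAt c₂ u = c₂ ⟨s(v,u), G.mem_edgeSet.mpr hadj⟩ from by
            simp only [colorAt, dif_pos hadj]] at hcol
          exact hcol
        · rintro ⟨huw, hmem, hcol⟩
          have hadj : G.Adj v u := by simpa [Nbr, Set.mem_toFinset] using hmem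
          refine ⟨hmem, ?_⟩
          have hedne : s(v, u) ≠ s(v, w) := by
            intro h
            rcases Sym2.eq_iff.mp h with ⟨-, h2⟩ | ⟨h1, -⟩
            · exact huw h2
            · exact hw.ne h1
          rw [show colorAt c₂ u = c₂ ⟨s(v,u), G.mem_edgeSet.mpr hadj⟩ from by
            simp only [colorAt, dif_pos hadj]]
          rw [← hagree _ hedne]
          rw [show colorAt c₁ u = c₁ ⟨s(v,u), G.mem_edgeSet.mpr hadj⟩ from by
            simp only [colorAt, dif_pos hadj]] at hcol
          exact hcol
      have hwmem : w ∈ N c₁ i₁ := by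
        simp only [N, Finset.mem_filter]
        refine ⟨by simpa [Nbr, Set.mem_toFinset] using hw, ?_⟩
        simp only [colorAt, dif_pos hw]; rfl
      have h1 : (N c₁ i₁).card = t - 1 := hexact c₁ h₁ i₁
      have h2 : (N c₂ i₁).card = t - 1 := hexact c₂ h₂ i₁
      rw [hNw, Finset.card_erase_of_mem hwmem, h1] at h2
      omega
    funext e
    by_cases hcase : e.1 = s(v, w)
    · have : e = E := Subtype.ext hcase
      rw [this]; exact hkey
    · exact hagree e hcase
  exact Nat.card_le_card_of_injective _ hinj
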